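/- For real constants C₁, C₂, C₃, C₄, define the Hamiltonian H(X,h) = C₁·X·√(1−X²)·cos(h) + C₂·(1−X²)·cos(2h) + C₃·X + C₄·X² on the strip {(X,h) : X ∈ (−1,1), h ∈ ℝ}. Then the secular spin ODE system Ẋ = sin(h)·[C₁·X·√(1−X²) + 4·C₂·cos(h)·(1−X²)], ḣ = C₁·cos(h)·(1−2X²)/√(1−X²) − 2·C₂·X·cos(2h) + C₃ + 2·C₄·X coincides with the Hamiltonian vector field of H; i.e., for all X ∈ (−1,1) and h ∈ ℝ, the right-hand side of Ẋ equals −∂H/∂h(X,h) and the right-hand side of ḣ equals ∂H/∂X(X,h). -/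

import Mathlib

open Real in
/-- The secular spin ODE system
`Ẋ = sin h·[C₁ X √(1−X²) + 4 C₂ cos h (1−X²)]`,
`ḣ = C₁ cos h (1−2X²)/√(1−X²) − 2 C₂ X cos 2h + C₃ + 2 C₄ X`
coincides with the Hamiltonian vector field of
`H(X,h) = C₁ X √(1−X²) cos h + C₂ (1−X²) cos 2h + C₃ X + C₄ X²`
on the strip `X ∈ (−1,1)`:  Ẋ-rhs `= −∂H/∂h` and ḣ-rhs `= ∂H/∂X`. -/
theorem stmt_4 (C₁ C₂ C₃ C₄ : ℝ)
    (H : ℝ → ℝ → ℝ)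
    (hH : ∀ X h : ℝ, H X h =
      C₁ * X * Real.sqrt (1 - X ^ 2) * Real.cos h
        + C₂ * (1 - X ^ 2) * Real.cos (2 * h) + C₃ * X + C₄ * X ^ 2) :
    ∀ X ∈ Set.Ioo (-1 : ℝ) 1, ∀ h : ℝ,
      (Real.sin h * (C₁ * X * Real.sqrt (1 - X ^ 2)
          + 4 * C₂ * Real.cos h * (1 - X ^ 2))
        = - deriv (fun h' => H X h') h)
      ∧ (C₁ * Real.cos h * (1 - 2 * X ^ 2) / Real.sqrt (1 - X ^ 2)
          - 2 * C₂ * X * Real.cos (2 * h) + C₃ + 2 * C₄ * X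
        = deriv (fun X' => H X' h) X) := by
  intro X hX h
  obtain ⟨hX1, hX2⟩ := hX
  have hpos : (0:ℝ) < 1 - X ^ 2 := by nlinarith
  have hsne : Real.sqrt (1 - X ^ 2) ≠ 0 := by positivity
  have hs2 : Real.sqrt (1 - X ^ 2) ^ 2 = 1 - X ^ 2 := Real.sq_sqrt hpos.le
  constructor
  · have heq : (fun h' => H X h') = fun h' : ℝ =>
        C₁ * X * Real.sqrt (1 - X ^ 2) * Real.cos h'
        + C₂ * (1 - X ^ 2) * Real.cos (2 * h') + C₃ * X + C₄ * X ^ 2 := by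
      funext h'; exact hH X h'
    rw [heq]
    have hd : HasDerivAt (fun h' : ℝ =>
        C₁ * X * Real.sqrt (1 - X ^ 2) * Real.cos h'
        + C₂ * (1 - X ^ 2) * Real.cos (2 * h') + C₃ * X + C₄ * X ^ 2)
        (C₁ * X * Real.sqrt (1 - X ^ 2) * (-Real.sin h)
          + C₂ * (1 - X ^ 2) * (-Real.sin (2 * h) * 2)) h := by
      have h1 := (Real.hasDerivAt_cos h).const_mul (C₁ * X * Real.sqrt (1 - X ^ 2))
      have h2 : HasDerivAt (fun h' : ℝ => Real.cos (2 * h')) (-Real.sin (2 * h) * 2) h := by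
        have := ((hasDerivAt_id h).const_mul 2).cos
        simpa using this
      have h2' := h2.const_mul (C₂ * (1 - X ^ 2))
      have := ((h1.add h2').add_const (C₃ * X)).add_const (C₄ * X ^ 2)
      exact this
    rw [hd.deriv, Real.sin_two_mul]
    ring
  · have heq : (fun X' => H X' h) = fun X' : ℝ =>
        C₁ * X' * Real.sqrt (1 - X' ^ 2) * Real.cos h
        + C₂ * (1 - X' ^ 2) * Real.cos (2 * h) + C₃ * X' + C₄ * X' ^ 2 := by
      funext X'; exact hH X' h
    rw [heq]
    have hq : HasDerivAt (fun X' : ℝ => 1 - X' ^ 2) (-(2 * X)) X := by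
      have := (hasDerivAt_pow 2 X).const_sub 1
      simpa using this
    have hsqrt : HasDerivAt (fun X' : ℝ => Real.sqrt (1 - X' ^ 2))
        (-X / Real.sqrt (1 - X ^ 2)) X := by
      have : HasDerivAt (fun X' : ℝ => Real.sqrt (1 - X' ^ 2))
          (1 / (2 * Real.sqrt (1 - X ^ 2)) * -(2 * X)) X :=
        (Real.hasDerivAt_sqrt hpos.ne').comp X hq
      convert this using 1
      field_simp
    have h1 : HasDerivAt (fun X' : ℝ => C₁ * X' * Real.sqrt (1 - X' ^ 2) * Real.cos h)
        ((C₁ * Real.sqrt (1 - X ^ 2) + C₁ * X * (-X / Real.sqrt (1 - X ^ 2))) * Real.cos h) X := by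
      have hid : HasDerivAt (fun X' : ℝ => C₁ * X') C₁ X := by
        simpa using (hasDerivAt_id X).const_mul C₁
      exact (hid.mul hsqrt).mul_const (Real.cos h)
    have h2 : HasDerivAt (fun X' : ℝ => C₂ * (1 - X' ^ 2) * Real.cos (2 * h))
        (C₂ * (-(2 * X)) * Real.cos (2 * h)) X := by
      have := (hq.const_mul C₂).mul_const (Real.cos (2 * h))
      simpa [mul_comm, mul_assoc] using this
    have h3 : HasDerivAt (fun X' : ℝ => C₃ * X') C₃ X := by
      simpa using (hasDerivAt_id X).const_mul C₃
    have h4 : HasDerivAt (fun X' : ℝ => C₄ * X' ^ 2) (C₄ * (2 * X)) X := by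
      have := (hasDerivAt_pow 2 X).const_mul C₄
      simpa [mul_comm] using this
    have hd : HasDerivAt (fun X' : ℝ => C₁ * X' * Real.sqrt (1 - X' ^ 2) * Real.cos h
        + C₂ * (1 - X' ^ 2) * Real.cos (2 * h) + C₃ * X' + C₄ * X' ^ 2) _ X :=
      ((h1.add h2).add h3).add h4
    rw [hd.deriv]
    have hsq : Real.sqrt (1 - X ^ 2) * Real.sqrt (1 - X ^ 2) = 1 - X ^ 2 := by
      rw [← sq]; exact hs2
    field_simp
    linear_combination (-C₁ * Real.cos h) * hs2
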